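/- Fix coprime positive integers q₁, q₂, bounded Borel sets B₁, B₂ ⊂ ℝ², and k ∈ ℤ². Then the sum over (p₁,p₂) ∈ ℤ²×ℤ² with q₂p₁ − q₁p₂ = k of ∫_{[0,1)²} χ_{B₁}(p₁ + q₁x)·χ_{B₂}(p₂ + q₂x) dx equals (q₁q₂)⁻² · Vol₂((q₂B₁ − k) ∩ q₁B₂). -/

import Mathlib

open MeasureTheory

private lemma exu_Ico (v : ℝ) {Q : ℝ} (hQ : 0 < Q) (z : ℝ) :
    ∃! n : ℤ, z ∈ Set.Ico (v + Q * n) (v + Q * n + Q) := by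
  refine ⟨⌊(z - v) / Q⌋, ⟨?_, ?_⟩, fun m hm => ?_⟩
  · have h := Int.floor_le ((z - v) / Q)
    have := (mul_le_mul_iff_right₀ hQ).mpr h
    rw [mul_div_cancel₀ _ hQ.ne'] at this
    linarith
  · have h := Int.lt_floor_add_one ((z - v) / Q)
    have := (mul_lt_mul_iff_right₀ hQ).mpr h
    rw [mul_div_cancel₀ _ hQ.ne'] at this
    push_cast at this ⊢
    linarith
  · obtain ⟨h1, h2⟩ := hm
    symm
    rw [Int.floor_eq_iff]
    constructor
    · rw [le_div_iff₀ hQ]; linarith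
    · rw [div_lt_iff₀ hQ]; push_cast; linarith

private lemma tsum_vol_tiles (S : Set (ℝ × ℝ)) (hS : MeasurableSet S) (v₁ v₂ : ℝ)
    {Q : ℝ} (hQ : 0 < Q) :
    ∑' t : ℤ × ℤ, volume (S ∩ (Set.Ico (v₁ + Q * t.1) (v₁ + Q * t.1 + Q) ×ˢ
      Set.Ico (v₂ + Q * t.2) (v₂ + Q * t.2 + Q))) = volume S := by
  set T : ℤ × ℤ → Set (ℝ × ℝ) := fun t => Set.Ico (v₁ + Q * t.1) (v₁ + Q * t.1 + Q) ×ˢ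
      Set.Ico (v₂ + Q * t.2) (v₂ + Q * t.2 + Q) with hT
  have hdisj : Pairwise (Function.onFun Disjoint fun t => S ∩ T t) := by
    intro s t hst
    rw [Function.onFun, Set.disjoint_left]
    rintro z ⟨-, hzs⟩ ⟨-, hzt⟩
    obtain ⟨hs1, hs2⟩ := hzs
    obtain ⟨ht1, ht2⟩ := hzt
    obtain ⟨n₁, -, hu₁⟩ := exu_Ico v₁ hQ z.1
    obtain ⟨n₂, -, hu₂⟩ := exu_Ico v₂ hQ z.2
    exact hst (Prod.ext ((hu₁ _ hs1).trans (hu₁ _ ht1).symm)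
      ((hu₂ _ hs2).trans (hu₂ _ ht2).symm))
  have hmeas : ∀ t : ℤ × ℤ, MeasurableSet (S ∩ T t) := fun t =>
    hS.inter (measurableSet_Ico.prod measurableSet_Ico)
  rw [← measure_iUnion hdisj hmeas, ← Set.inter_iUnion]
  congr 1
  have : (⋃ t : ℤ × ℤ, T t) = Set.univ := by
    ext z
    simp only [Set.mem_iUnion, Set.mem_univ, iff_true]
    obtain ⟨n₁, hn₁, -⟩ := exu_Ico v₁ hQ z.1
    obtain ⟨n₂, hn₂, -⟩ := exu_Ico v₂ hQ z.2
    exact ⟨(n₁, n₂), hn₁, hn₂⟩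
  rw [this, Set.inter_univ]

private lemma S1_eq (q₂ : ℕ) (hq₂ : 0 < q₂) (B₁ : Set (ℝ × ℝ)) (k : ℤ × ℤ) :
    {z : ℝ × ℝ | ∃ u ∈ B₁, z = (q₂ : ℝ) • u - ((k.1 : ℝ), (k.2 : ℝ))}
      = (fun z : ℝ × ℝ => ((z.1 + k.1) / q₂, (z.2 + k.2) / q₂)) ⁻¹' B₁ := by
  have hq : (q₂ : ℝ) ≠ 0 := Nat.cast_ne_zero.mpr hq₂.ne'
  ext z
  simp only [Set.mem_setOf_eq, Set.mem_preimage]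
  constructor
  · rintro ⟨⟨u₁, u₂⟩, hu, rfl⟩
    convert hu using 2 <;> simp [Prod.smul_mk] <;> field_simp
  · intro h
    refine ⟨_, h, ?_⟩
    rw [Prod.ext_iff]
    constructor <;> simp [Prod.smul_mk] <;> field_simp <;> ring

private lemma S2_eq (q₁ : ℕ) (hq₁ : 0 < q₁) (B₂ : Set (ℝ × ℝ)) :
    {z : ℝ × ℝ | ∃ v ∈ B₂, z = (q₁ : ℝ) • v}
      = (fun z : ℝ × ℝ => (z.1 / q₁, z.2 / q₁)) ⁻¹' B₂ := by
  have hq : (q₁ : ℝ) ≠ 0 := Nat.cast_ne_zero.mpr hq₁.ne'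
  ext z
  simp only [Set.mem_setOf_eq, Set.mem_preimage]
  constructor
  · rintro ⟨⟨u₁, u₂⟩, hu, rfl⟩
    convert hu using 2 <;> simp [Prod.smul_mk] <;> field_simp
  · intro h
    refine ⟨_, h, ?_⟩
    rw [Prod.ext_iff]
    constructor <;> simp [Prod.smul_mk] <;> field_simp

private lemma vol_preimage_affine (w : ℝ × ℝ) {Q : ℝ} (hQ : 0 < Q) (A : Set (ℝ × ℝ)) :
    volume ((fun x : ℝ × ℝ => w + Q • x) ⁻¹' A) = ENNReal.ofReal (Q ^ 2)⁻¹ * volume A := by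
  have h : (fun x : ℝ × ℝ => w + Q • x) ⁻¹' A = (Q • ·) ⁻¹' ((fun y => w + y) ⁻¹' A) := rfl
  rw [h, Measure.addHaar_preimage_smul volume hQ.ne', measure_preimage_add]
  have h2 : Module.finrank ℝ (ℝ × ℝ) = 2 := by simp
  rw [h2, abs_of_nonneg (by positivity)]

set_option maxHeartbeats 1000000 in
private lemma term_eq (q₁ q₂ : ℕ) (hq₁ : 0 < q₁) (hq₂ : 0 < q₂)
    (B₁ B₂ : Set (ℝ × ℝ)) (hB₁m : MeasurableSet B₁) (hB₂m : MeasurableSet B₂)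
    (k : ℤ × ℤ) (P₁ P₂ : ℤ × ℤ)
    (h₁ : (q₂ : ℤ) * P₁.1 - (q₁ : ℤ) * P₂.1 = k.1)
    (h₂ : (q₂ : ℤ) * P₁.2 - (q₁ : ℤ) * P₂.2 = k.2) :
    (∫ x in Set.Ico (0:ℝ) 1 ×ˢ Set.Ico (0:ℝ) 1,
        (Set.indicator B₁ (fun _ => (1:ℝ)) ((P₁.1 : ℝ) + q₁ * x.1, (P₁.2 : ℝ) + q₁ * x.2)) *
        (Set.indicator B₂ (fun _ => (1:ℝ)) ((P₂.1 : ℝ) + q₂ * x.1, (P₂.2 : ℝ) + q₂ * x.2)))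
    = ((q₁ * q₂ : ℝ))⁻¹ ^ 2 *
        (volume (({z : ℝ × ℝ | ∃ u ∈ B₁, z = (q₂ : ℝ) • u - ((k.1 : ℝ), (k.2 : ℝ))} ∩
                  {z : ℝ × ℝ | ∃ v ∈ B₂, z = (q₁ : ℝ) • v}) ∩
          (Set.Ico ((q₁:ℝ) * P₂.1) ((q₁:ℝ) * P₂.1 + q₁ * q₂) ×ˢ
           Set.Ico ((q₁:ℝ) * P₂.2) ((q₁:ℝ) * P₂.2 + q₁ * q₂)))).toReal := by
  have hq₁' : (0:ℝ) < q₁ := by exact_mod_cast hq₁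
  have hq₂' : (0:ℝ) < q₂ := by exact_mod_cast hq₂
  have hQ : (0:ℝ) < q₁ * q₂ := by positivity
  have h₁' : (q₂:ℝ) * P₁.1 - (q₁:ℝ) * P₂.1 = k.1 := by exact_mod_cast h₁
  have h₂' : (q₂:ℝ) * P₁.2 - (q₁:ℝ) * P₂.2 = k.2 := by exact_mod_cast h₂
  set E : Set (ℝ × ℝ) :=
    (fun x : ℝ × ℝ => ((P₁.1 : ℝ) + q₁ * x.1, (P₁.2 : ℝ) + q₁ * x.2)) ⁻¹' B₁ ∩
    (fun x : ℝ × ℝ => ((P₂.1 : ℝ) + q₂ * x.1, (P₂.2 : ℝ) + q₂ * x.2)) ⁻¹' B₂ with hE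
  have hEm : MeasurableSet E := by
    apply MeasurableSet.inter
    · exact hB₁m.preimage (by fun_prop)
    · exact hB₂m.preimage (by fun_prop)
  have hint : ∀ x : ℝ × ℝ,
      (Set.indicator B₁ (fun _ => (1:ℝ)) ((P₁.1 : ℝ) + q₁ * x.1, (P₁.2 : ℝ) + q₁ * x.2)) *
      (Set.indicator B₂ (fun _ => (1:ℝ)) ((P₂.1 : ℝ) + q₂ * x.1, (P₂.2 : ℝ) + q₂ * x.2))
      = Set.indicator E (fun _ => (1:ℝ)) x := by
    intro x
    by_cases hx1 : ((P₁.1 : ℝ) + q₁ * x.1, (P₁.2 : ℝ) + q₁ * x.2) ∈ B₁ <;>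
      by_cases hx2 : ((P₂.1 : ℝ) + q₂ * x.1, (P₂.2 : ℝ) + q₂ * x.2) ∈ B₂ <;>
      simp [hE, Set.indicator_apply, hx1, hx2]
  rw [integral_congr_ae (Filter.Eventually.of_forall hint), setIntegral_indicator hEm,
    setIntegral_const, smul_eq_mul, mul_one]
  have hkey : (Set.Ico (0:ℝ) 1 ×ˢ Set.Ico (0:ℝ) 1) ∩ E
      = (fun x : ℝ × ℝ => (((q₁:ℝ) * P₂.1, (q₁:ℝ) * P₂.2) : ℝ × ℝ) + ((q₁ * q₂ : ℝ)) • x) ⁻¹'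
        (({z : ℝ × ℝ | ∃ u ∈ B₁, z = (q₂ : ℝ) • u - ((k.1 : ℝ), (k.2 : ℝ))} ∩
          {z : ℝ × ℝ | ∃ v ∈ B₂, z = (q₁ : ℝ) • v}) ∩
          (Set.Ico ((q₁:ℝ) * P₂.1) ((q₁:ℝ) * P₂.1 + q₁ * q₂) ×ˢ
           Set.Ico ((q₁:ℝ) * P₂.2) ((q₁:ℝ) * P₂.2 + q₁ * q₂))) := by
    rw [S1_eq q₂ hq₂ B₁ k, S2_eq q₁ hq₁ B₂]
    ext x
    simp only [hE, Set.mem_inter_iff, Set.mem_preimage, Set.mem_prod, Set.mem_Ico,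
      Prod.fst_add, Prod.snd_add, Prod.smul_fst, Prod.smul_snd, smul_eq_mul]
    have e1 : ((q₁:ℝ) * P₂.1 + q₁ * q₂ * x.1 + k.1) / q₂ = (P₁.1 : ℝ) + q₁ * x.1 := by
      rw [div_eq_iff hq₂'.ne']; linear_combination -h₁'
    have e2 : ((q₁:ℝ) * P₂.2 + q₁ * q₂ * x.2 + k.2) / q₂ = (P₁.2 : ℝ) + q₁ * x.2 := by
      rw [div_eq_iff hq₂'.ne']; linear_combination -h₂'
    have e3 : ((q₁:ℝ) * P₂.1 + q₁ * q₂ * x.1) / q₁ = (P₂.1 : ℝ) + q₂ * x.1 := by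
      rw [div_eq_iff hq₁'.ne']; ring
    have e4 : ((q₁:ℝ) * P₂.2 + q₁ * q₂ * x.2) / q₁ = (P₂.2 : ℝ) + q₂ * x.2 := by
      rw [div_eq_iff hq₁'.ne']; ring
    have key1 : ∀ w r : ℝ, w ≤ w + (q₁ * q₂ : ℝ) * r ↔ 0 ≤ r := by
      intro w r
      rw [le_add_iff_nonneg_right]
      constructor
      · intro h; by_contra hr; push_neg at hr; nlinarith
      · intro h; positivity
    have key2 : ∀ w r : ℝ, w + (q₁ * q₂ : ℝ) * r < w + q₁ * q₂ ↔ r < 1 := by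
      intro w r
      rw [add_lt_add_iff_left]
      nth_rewrite 2 [← mul_one ((q₁ : ℝ) * q₂)]
      exact mul_lt_mul_iff_right₀ hQ
    rw [e1, e2, e3, e4, key1, key1, key2, key2]
    tauto
  rw [hkey, measureReal_def, vol_preimage_affine _ hQ, ENNReal.toReal_mul, ENNReal.toReal_ofReal (by positivity)]
  rw [inv_pow]

private def pairEquiv (q₁ q₂ : ℕ) (k : ℤ × ℤ) (u v : ℤ)
    (huv : (q₁ : ℤ) * u + (q₂ : ℤ) * v = 1) :
    (ℤ × ℤ) ≃ {p : (ℤ × ℤ) × (ℤ × ℤ) // (q₂ : ℤ) • p.1 - (q₁ : ℤ) • p.2 = k} where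
  toFun t := ⟨((k.1 * v + q₁ * t.1, k.2 * v + q₁ * t.2),
               (-(k.1 * u) + q₂ * t.1, -(k.2 * u) + q₂ * t.2)), by
    rw [Prod.ext_iff]
    constructor
    · show (q₂ : ℤ) * (k.1 * v + q₁ * t.1) - q₁ * (-(k.1 * u) + q₂ * t.1) = k.1
      linear_combination k.1 * huv
    · show (q₂ : ℤ) * (k.2 * v + q₁ * t.2) - q₁ * (-(k.2 * u) + q₂ * t.2) = k.2
      linear_combination k.2 * huv⟩
  invFun p := (u * p.1.1.1 + v * p.1.2.1, u * p.1.1.2 + v * p.1.2.2)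
  left_inv t := by
    rw [Prod.ext_iff]
    constructor
    · show u * (k.1 * v + q₁ * t.1) + v * (-(k.1 * u) + q₂ * t.1) = t.1
      linear_combination t.1 * huv
    · show u * (k.2 * v + q₁ * t.2) + v * (-(k.2 * u) + q₂ * t.2) = t.2
      linear_combination t.2 * huv
  right_inv p := by
    obtain ⟨⟨⟨p₁₁, p₁₂⟩, ⟨p₂₁, p₂₂⟩⟩, hp⟩ := p
    have hp1 : (q₂ : ℤ) * p₁₁ - q₁ * p₂₁ = k.1 := by
      have := congrArg Prod.fst hp; simpa using this
    have hp2 : (q₂ : ℤ) * p₁₂ - q₁ * p₂₂ = k.2 := by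
      have := congrArg Prod.snd hp; simpa using this
    apply Subtype.ext
    simp only []
    refine Prod.ext (Prod.ext ?_ ?_) (Prod.ext ?_ ?_) <;> simp only []
    · show k.1 * v + (q₁ : ℤ) * (u * p₁₁ + v * p₂₁) = p₁₁
      linear_combination -v * hp1 + p₁₁ * huv
    · show k.2 * v + (q₁ : ℤ) * (u * p₁₂ + v * p₂₂) = p₁₂
      linear_combination -v * hp2 + p₁₂ * huv
    · show -(k.1 * u) + (q₂ : ℤ) * (u * p₁₁ + v * p₂₁) = p₂₁
      linear_combination u * hp1 + p₂₁ * huv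
    · show -(k.2 * u) + (q₂ : ℤ) * (u * p₁₂ + v * p₂₂) = p₂₂
      linear_combination u * hp2 + p₂₂ * huv

theorem Ck_formula (q₁ q₂ : ℕ) (hq₁ : 0 < q₁) (hq₂ : 0 < q₂) (hco : Nat.Coprime q₁ q₂)
    (B₁ B₂ : Set (ℝ × ℝ))
    (hB₁m : MeasurableSet B₁) (hB₂m : MeasurableSet B₂)
    (hB₁b : Bornology.IsBounded B₁) (hB₂b : Bornology.IsBounded B₂) (k : ℤ × ℤ) :
    (∑' p : {p : (ℤ × ℤ) × (ℤ × ℤ) // (q₂ : ℤ) • p.1 - (q₁ : ℤ) • p.2 = k},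
        ∫ x in Set.Ico (0:ℝ) 1 ×ˢ Set.Ico (0:ℝ) 1,
          (Set.indicator B₁ (fun _ => (1:ℝ))
              ((p.1.1.1 : ℝ) + q₁ * x.1, (p.1.1.2 : ℝ) + q₁ * x.2)) *
          (Set.indicator B₂ (fun _ => (1:ℝ))
              ((p.1.2.1 : ℝ) + q₂ * x.1, (p.1.2.2 : ℝ) + q₂ * x.2)))
      = ((q₁ * q₂ : ℝ))⁻¹ ^ 2 *
          (volume ({z : ℝ × ℝ | ∃ u ∈ B₁, z = (q₂ : ℝ) • u - ((k.1 : ℝ), (k.2 : ℝ))} ∩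
                   {z : ℝ × ℝ | ∃ v ∈ B₂, z = (q₁ : ℝ) • v})).toReal := by
  have hq₁' : (0:ℝ) < q₁ := by exact_mod_cast hq₁
  have hq₂' : (0:ℝ) < q₂ := by exact_mod_cast hq₂
  have hQ : (0:ℝ) < (q₁ : ℝ) * q₂ := by positivity
  obtain ⟨u, v, huv⟩ : ∃ u v : ℤ, (q₁ : ℤ) * u + (q₂ : ℤ) * v = 1 := by
    have h : IsCoprime (q₁ : ℤ) (q₂ : ℤ) := Int.isCoprime_iff_gcd_eq_one.mpr (by simpa using hco)
    obtain ⟨a, b, hab⟩ := h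
    exact ⟨a, b, by linear_combination hab⟩
  have hSm : MeasurableSet ({z : ℝ × ℝ | ∃ u ∈ B₁, z = (q₂ : ℝ) • u - ((k.1 : ℝ), (k.2 : ℝ))} ∩
      {z : ℝ × ℝ | ∃ v ∈ B₂, z = (q₁ : ℝ) • v}) := by
    rw [S1_eq q₂ hq₂ B₁ k, S2_eq q₁ hq₁ B₂]
    exact (hB₁m.preimage (by fun_prop)).inter (hB₂m.preimage (by fun_prop))
  rw [← Equiv.tsum_eq (pairEquiv q₁ q₂ k u v huv)]
  have step : ∀ t : ℤ × ℤ,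
      (∫ x in Set.Ico (0:ℝ) 1 ×ˢ Set.Ico (0:ℝ) 1,
        (Set.indicator B₁ (fun _ => (1:ℝ))
            ((((pairEquiv q₁ q₂ k u v huv t : {p : (ℤ × ℤ) × (ℤ × ℤ) //
                (q₂ : ℤ) • p.1 - (q₁ : ℤ) • p.2 = k}).1.1.1 : ℝ) + q₁ * x.1,
             (((pairEquiv q₁ q₂ k u v huv t).1.1.2 : ℝ)) + q₁ * x.2)) *
        (Set.indicator B₂ (fun _ => (1:ℝ))
            ((((pairEquiv q₁ q₂ k u v huv t).1.2.1 : ℝ)) + q₂ * x.1,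
             (((pairEquiv q₁ q₂ k u v huv t).1.2.2 : ℝ)) + q₂ * x.2))))
      = ((q₁ * q₂ : ℝ))⁻¹ ^ 2 *
        (volume (({z : ℝ × ℝ | ∃ u ∈ B₁, z = (q₂ : ℝ) • u - ((k.1 : ℝ), (k.2 : ℝ))} ∩
                  {z : ℝ × ℝ | ∃ v ∈ B₂, z = (q₁ : ℝ) • v}) ∩
          (Set.Ico (-((q₁:ℝ) * k.1 * u) + (q₁:ℝ) * q₂ * t.1)
                   (-((q₁:ℝ) * k.1 * u) + (q₁:ℝ) * q₂ * t.1 + (q₁:ℝ) * q₂) ×ˢ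
           Set.Ico (-((q₁:ℝ) * k.2 * u) + (q₁:ℝ) * q₂ * t.2)
                   (-((q₁:ℝ) * k.2 * u) + (q₁:ℝ) * q₂ * t.2 + (q₁:ℝ) * q₂)))).toReal := by
    intro t
    have hp := (pairEquiv q₁ q₂ k u v huv t).2
    have h1 : (q₂ : ℤ) * (pairEquiv q₁ q₂ k u v huv t).1.1.1 -
        (q₁ : ℤ) * (pairEquiv q₁ q₂ k u v huv t).1.2.1 = k.1 := by
      have := congrArg Prod.fst hp; simpa using this
    have h2 : (q₂ : ℤ) * (pairEquiv q₁ q₂ k u v huv t).1.1.2 -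
        (q₁ : ℤ) * (pairEquiv q₁ q₂ k u v huv t).1.2.2 = k.2 := by
      have := congrArg Prod.snd hp; simpa using this
    rw [term_eq q₁ q₂ hq₁ hq₂ B₁ B₂ hB₁m hB₂m k
      (pairEquiv q₁ q₂ k u v huv t).1.1 (pairEquiv q₁ q₂ k u v huv t).1.2 h1 h2]
    have b1 : (q₁ : ℝ) * ((pairEquiv q₁ q₂ k u v huv t).1.2.1 : ℝ)
        = -((q₁:ℝ) * k.1 * u) + (q₁:ℝ) * q₂ * t.1 := by
      simp only [pairEquiv, Equiv.coe_fn_mk]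
      push_cast
      ring
    have b2 : (q₁ : ℝ) * ((pairEquiv q₁ q₂ k u v huv t).1.2.2 : ℝ)
        = -((q₁:ℝ) * k.2 * u) + (q₁:ℝ) * q₂ * t.2 := by
      simp only [pairEquiv, Equiv.coe_fn_mk]
      push_cast
      ring
    rw [b1, b2]
  rw [tsum_congr step, tsum_mul_left]
  congr 1
  rw [← tsum_vol_tiles _ hSm (-((q₁:ℝ) * k.1 * u)) (-((q₁:ℝ) * k.2 * u)) hQ]
  refine (ENNReal.tsum_toReal_eq fun t => ?_).symm
  apply ne_top_of_le_ne_top _ (measure_mono Set.inter_subset_right)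
  rw [Measure.volume_eq_prod, Measure.prod_prod, Real.volume_Ico, Real.volume_Ico]
  exact ENNReal.mul_ne_top ENNReal.ofReal_ne_top ENNReal.ofReal_ne_top
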